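/- For complex τ and z with Im τ > 0, ∏_{n=1}^∞ (1 - e^{2πinτ})(1 + e^{πi(2n-1)τ} e^{2πiz})(1 + e^{πi(2n-1)τ} e^{-2πiz}) = ∑_{n=-∞}^∞ e^{πin²τ} e^{2πinz}. -/

import Mathlib

open Finset Filter Topology

namespace JTP

noncomputable def u (Q : ℂ) (n : ℕ) : ℂ := ∏ k ∈ Finset.range n, (1 - Q ^ (k + 1))
noncomputable def gb (Q : ℂ) (n m : ℕ) : ℂ :=
  if m ≤ n then u Q n / (u Q m * u Q (n - m)) else 0
variable {Q : ℂ}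
lemma one_sub_pow_ne (hQ : ‖Q‖ < 1) (k : ℕ) : (1 : ℂ) - Q ^ (k + 1) ≠ 0 := by
  intro h
  have h1 : Q ^ (k + 1) = 1 := by linear_combination -h
  have : ‖Q ^ (k + 1)‖ < 1 := by
    rw [norm_pow]; exact pow_lt_one₀ (norm_nonneg _) hQ (Nat.succ_ne_zero k)
  rw [h1] at this; simp at this
lemma u_zero : u Q 0 = 1 := by simp [u]
lemma u_succ (n : ℕ) : u Q (n + 1) = u Q n * (1 - Q ^ (n + 1)) := by
  simp [u, Finset.prod_range_succ]
lemma u_ne (hQ : ‖Q‖ < 1) (n : ℕ) : u Q n ≠ 0 := by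
  rw [u, Finset.prod_ne_zero_iff]; exact fun k _ => one_sub_pow_ne hQ k
lemma gb_of_lt {n m : ℕ} (h : n < m) : gb Q n m = 0 := by simp [gb, Nat.not_le.2 h]
lemma gb_self (hQ : ‖Q‖ < 1) (n : ℕ) : gb Q n n = 1 := by
  simp [gb, u_zero, div_self (u_ne hQ n)]
lemma gb_eq {n m : ℕ} (h : m ≤ n) : gb Q n m = u Q n / (u Q m * u Q (n - m)) :=
  if_pos h

lemma v1nat (hQ : ‖Q‖ < 1) (n m : ℕ) :
    gb Q (n + 2) (m + 2) =
      (1 + Q ^ (n + 1)) * gb Q n (m + 1) + Q ^ (n - m) * gb Q n m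
        + Q ^ (m + 2) * gb Q n (m + 2) := by
  rcases lt_or_ge n m with h | h
  · rw [gb_of_lt (by omega), gb_of_lt (by omega), gb_of_lt (by omega),
      gb_of_lt (by omega)]
    ring
  rcases eq_or_lt_of_le h with h1 | h1
  · subst h1
    rw [gb_self hQ, gb_self hQ, gb_of_lt (by omega), gb_of_lt (by omega)]
    simp
  rcases eq_or_lt_of_le (Nat.succ_le_of_lt h1) with h2 | h2
  · -- n = m + 1
    have hn : n = m + 1 := h2.symm
    subst hn
    have h1 : (1 : ℂ) - Q ^ (0 + 1) ≠ 0 := one_sub_pow_ne hQ 0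
    have hu1 : u Q 1 ≠ 0 := u_ne hQ 1
    have hum := u_ne hQ m
    have e1 : gb Q (m + 1 + 2) (m + 2) = (1 - Q ^ (m + 3)) / u Q 1 := by
      rw [gb_eq (by omega), show m + 1 + 2 - (m + 2) = 1 by omega,
        show m + 1 + 2 = (m + 2) + 1 by ring, u_succ (m + 2),
        show m + 2 + 1 = m + 3 by ring]
      rw [div_eq_div_iff (mul_ne_zero (u_ne hQ (m + 2)) hu1) hu1]; ring
    have e2 : gb Q (m + 1) (m + 1) = 1 := gb_self hQ _
    have e3 : gb Q (m + 1) m = (1 - Q ^ (m + 1)) / u Q 1 := by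
      rw [gb_eq (by omega), show m + 1 - m = 1 by omega, u_succ m]
      rw [div_eq_div_iff (mul_ne_zero hum hu1) hu1]; ring
    have e4 : gb Q (m + 1) (m + 2) = 0 := gb_of_lt (by omega)
    rw [e1, e2, e3, e4, show m + 1 - m = 1 by omega]
    rw [show u Q 1 = 1 - Q ^ (0 + 1) by rw [show (1:ℕ) = 0 + 1 by ring, u_succ 0, u_zero, one_mul]]
    rw [div_eq_iff h1, add_mul, add_mul, mul_assoc (Q ^ 1), div_mul_cancel₀ _ h1]
    ring
  · -- interior : n = m + 2 + d
    obtain ⟨d, rfl⟩ : ∃ d, n = m + 2 + d := ⟨n - (m + 2), by omega⟩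
    have hum1 := u_ne hQ (m + 1)
    have hud1 := u_ne hQ (d + 1)
    have hum := u_ne hQ m
    have hud := u_ne hQ d
    have hum2 := u_ne hQ (m + 2)
    have hud2 := u_ne hQ (d + 2)
    have hX := u_ne hQ (m + 2 + d)
    have fm1 : (1 : ℂ) - Q ^ (m + 1) ≠ 0 := one_sub_pow_ne hQ m
    have fm2 : (1 : ℂ) - Q ^ (m + 2) ≠ 0 := one_sub_pow_ne hQ (m + 1)
    have fd1 : (1 : ℂ) - Q ^ (d + 1) ≠ 0 := one_sub_pow_ne hQ d
    have fd2 : (1 : ℂ) - Q ^ (d + 2) ≠ 0 := one_sub_pow_ne hQ (d + 1)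
    have e1 : gb Q (m + 2 + d + 2) (m + 2) =
        u Q (m + 2 + d) * ((1 - Q ^ (m + d + 3)) * (1 - Q ^ (m + d + 4))) / (u Q (m + 2) * u Q (d + 2)) := by
      rw [gb_eq (by omega), show m + 2 + d + 2 - (m + 2) = d + 2 by omega,
        show m + 2 + d + 2 = (m + 2 + d + 1) + 1 by ring, u_succ, u_succ (m + 2 + d)]
      rw [show m + 2 + d + 1 + 1 = m + d + 4 by ring, show m + 2 + d + 1 = m + d + 3 by ring]
      ring
    have e2 : gb Q (m + 2 + d) (m + 1) =
        u Q (m + 2 + d) * ((1 - Q ^ (m + 2)) * (1 - Q ^ (d + 2))) / (u Q (m + 2) * u Q (d + 2)) := by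
      rw [gb_eq (by omega), show m + 2 + d - (m + 1) = d + 1 by omega]
      rw [div_eq_div_iff (by apply_rules [mul_ne_zero]) (by apply_rules [mul_ne_zero])]
      rw [show m + 2 = (m + 1) + 1 by ring, u_succ (m + 1),
        show d + 2 = (d + 1) + 1 by ring, u_succ (d + 1)]
      ring
    have e3 : gb Q (m + 2 + d) m =
        u Q (m + 2 + d) * ((1 - Q ^ (m + 1)) * (1 - Q ^ (m + 2))) / (u Q (m + 2) * u Q (d + 2)) := by
      rw [gb_eq (by omega), show m + 2 + d - m = d + 2 by omega]
      rw [div_eq_div_iff (by apply_rules [mul_ne_zero]) (by apply_rules [mul_ne_zero])]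
      rw [show m + 2 = (m + 1) + 1 by ring, u_succ (m + 1), u_succ m]
      ring
    have e4 : gb Q (m + 2 + d) (m + 2) =
        u Q (m + 2 + d) * ((1 - Q ^ (d + 1)) * (1 - Q ^ (d + 2))) / (u Q (m + 2) * u Q (d + 2)) := by
      rw [gb_eq (by omega), show m + 2 + d - (m + 2) = d by omega]
      rw [div_eq_div_iff (by apply_rules [mul_ne_zero]) (by apply_rules [mul_ne_zero])]
      rw [show d + 2 = (d + 1) + 1 by ring, u_succ (d + 1), u_succ d]
      ring
    rw [e1, e2, e3, e4, show m + 2 + d + 1 = m + d + 3 by ring,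
      show m + 2 + d - m = d + 2 by omega]
    rw [← mul_div_assoc, ← mul_div_assoc, ← mul_div_assoc, ← add_div, ← add_div]
    congr 1
    ring

noncomputable def gbz (Q : ℂ) (n : ℕ) (m : ℤ) : ℂ :=
  if 0 ≤ m then gb Q n m.toNat else 0

variable {q x : ℂ}

lemma gb_zero_right (hQ : ‖Q‖ < 1) (n : ℕ) : gb Q n 0 = 1 := by
  rw [gb_eq (Nat.zero_le n), u_zero, one_mul, Nat.sub_zero, div_self (u_ne hQ n)]

lemma gb_one_succ (hQ : ‖Q‖ < 1) (n : ℕ) : gb Q (n + 1) 1 = gb Q n 1 + Q ^ n := by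
  cases n with
  | zero => rw [gb_self hQ, gb_of_lt (by omega)]; norm_num
  | succ k =>
    have hu1 : u Q 1 ≠ 0 := u_ne hQ 1
    have e1 : gb Q (k + 2) 1 = (1 - Q ^ (k + 2)) / u Q 1 := by
      rw [gb_eq (by omega), show k + 2 - 1 = k + 1 by omega,
        show k + 2 = (k + 1) + 1 by ring, u_succ (k + 1)]
      rw [div_eq_div_iff (mul_ne_zero hu1 (u_ne hQ (k + 1))) hu1]; ring
    have e2 : gb Q (k + 1) 1 = (1 - Q ^ (k + 1)) / u Q 1 := by
      rw [gb_eq (by omega), show k + 1 - 1 = k by omega, u_succ k]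
      rw [div_eq_div_iff (mul_ne_zero hu1 (u_ne hQ k)) hu1]; ring
    rw [e1, e2, show u Q 1 = 1 - Q ^ (0 + 1) by
      rw [show (1:ℕ) = 0 + 1 by ring, u_succ 0, u_zero, one_mul]]
    rw [div_eq_iff (one_sub_pow_ne hQ 0), add_mul, div_mul_cancel₀ _ (one_sub_pow_ne hQ 0)]
    ring

lemma gb_one_eq (hQ : ‖Q‖ < 1) (n : ℕ) : (1 - Q) * gb Q n 1 = 1 - Q ^ n := by
  induction n with
  | zero => rw [gb_of_lt (by omega)]; norm_num
  | succ k ih => rw [gb_one_succ hQ, mul_add, ih, pow_succ]; ring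

lemma gbz_of_nonneg {n : ℕ} {m : ℤ} (h : 0 ≤ m) : gbz Q n m = gb Q n m.toNat := if_pos h
lemma gbz_of_neg {n : ℕ} {m : ℤ} (h : m < 0) : gbz Q n m = 0 := if_neg (by omega)
lemma gbz_of_gt {n : ℕ} {m : ℤ} (h : (n : ℤ) < m) : gbz Q n m = 0 := by
  rw [gbz_of_nonneg (by omega), gb_of_lt (by omega)]

lemma key (hq0 : q ≠ 0) (hq : ‖q‖ < 1) (N : ℕ) (i : ℤ) :
    gbz (q ^ 2) (2 * N + 2) ((N : ℤ) + 1 + i) * q ^ (i ^ 2) =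
      gbz (q ^ 2) (2 * N) ((N : ℤ) + i) * q ^ (i ^ 2) * (1 + q ^ (4 * N + 2))
      + gbz (q ^ 2) (2 * N) ((N : ℤ) + i - 1) * q ^ ((i - 1) ^ 2) * q ^ (2 * N + 1)
      + gbz (q ^ 2) (2 * N) ((N : ℤ) + i + 1) * q ^ ((i + 1) ^ 2) * q ^ (2 * N + 1) := by
  have hQ : ‖q ^ 2‖ < 1 := by
    rw [norm_pow]; exact pow_lt_one₀ (norm_nonneg _) hq (by norm_num)
  have hzp : ∀ a : ℕ, ∀ b : ℤ, q ^ a * q ^ b = q ^ ((a : ℤ) + b) := by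
    intro a b; rw [← zpow_natCast q a, ← zpow_add₀ hq0]
  rcases le_or_gt i (-(N : ℤ) - 2) with hA | hA
  · rw [gbz_of_neg (m := (N:ℤ) + 1 + i) (by omega), gbz_of_neg (m := (N:ℤ) + i) (by omega),
      gbz_of_neg (m := (N:ℤ) + i - 1) (by omega), gbz_of_neg (m := (N:ℤ) + i + 1) (by omega)]
    ring
  rcases eq_or_lt_of_le (show -(N:ℤ) - 1 ≤ i by omega) with hB | hB
  · -- i = -(N+1)
    obtain rfl : i = -(N:ℤ) - 1 := hB.symm
    rw [gbz_of_neg (m := (N:ℤ) + (-(N:ℤ) - 1)) (by omega),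
      gbz_of_neg (m := (N:ℤ) + (-(N:ℤ) - 1) - 1) (by omega),
      gbz_of_nonneg (m := (N:ℤ) + 1 + (-(N:ℤ) - 1)) (by omega),
      gbz_of_nonneg (m := (N:ℤ) + (-(N:ℤ) - 1) + 1) (by omega),
      show ((N : ℤ) + 1 + (-(N:ℤ) - 1)).toNat = 0 by omega,
      show ((N : ℤ) + (-(N:ℤ) - 1) + 1).toNat = 0 by omega,
      gb_zero_right hQ, gb_zero_right hQ]
    have e2 : q ^ ((-(N:ℤ) - 1 + 1) ^ 2) * q ^ (2 * N + 1) = q ^ ((-(N:ℤ) - 1) ^ 2) := by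
      rw [mul_comm, hzp]; congr 1; push_cast; ring
    linear_combination -e2
  rcases eq_or_lt_of_le (show -(N:ℤ) ≤ i by omega) with hC | hC
  · -- i = -N
    obtain rfl : i = -(N:ℤ) := hC.symm
    rw [gbz_of_nonneg (m := (N:ℤ) + 1 + -(N:ℤ)) (by omega),
      gbz_of_nonneg (m := (N:ℤ) + -(N:ℤ)) (by omega),
      gbz_of_neg (m := (N:ℤ) + -(N:ℤ) - 1) (by omega),
      gbz_of_nonneg (m := (N:ℤ) + -(N:ℤ) + 1) (by omega),
      show ((N : ℤ) + 1 + -(N:ℤ)).toNat = 1 by omega,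
      show ((N : ℤ) + -(N:ℤ)).toNat = 0 by omega,
      show ((N : ℤ) + -(N:ℤ) + 1).toNat = 1 by omega,
      gb_zero_right hQ]
    have h1 : gb (q ^ 2) (2 * N + 2) 1
        = gb (q ^ 2) (2 * N) 1 + (q ^ 2) ^ (2 * N) + (q ^ 2) ^ (2 * N + 1) := by
      rw [show 2 * N + 2 = (2 * N + 1) + 1 by ring, gb_one_succ hQ, gb_one_succ hQ]
    have h2 := gb_one_eq hQ (2 * N)
    have e2 : q ^ ((-(N:ℤ) + 1) ^ 2) * q ^ (2 * N + 1) = q ^ (2 : ℕ) * q ^ ((-(N:ℤ)) ^ 2) := by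
      rw [mul_comm, hzp (2 * N + 1), hzp 2]; congr 1; push_cast; ring
    rw [h1]
    linear_combination (q ^ ((-(N:ℤ)) ^ 2)) * h2 - gb (q ^ 2) (2 * N) 1 * e2
  · -- main case : i ≥ 1 - N
    rcases le_or_gt i ((N : ℤ) + 1) with hD | hD
    · obtain ⟨m, hm⟩ : ∃ m : ℕ, (m : ℤ) = (N:ℤ) + i - 1 := ⟨((N:ℤ) + i - 1).toNat, by omega⟩
      have hmle : m ≤ 2 * N := by omega
      rw [gbz_of_nonneg (m := (N:ℤ) + 1 + i) (by omega),
        gbz_of_nonneg (m := (N:ℤ) + i) (by omega),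
        gbz_of_nonneg (m := (N:ℤ) + i - 1) (by omega),
        gbz_of_nonneg (m := (N:ℤ) + i + 1) (by omega),
        show ((N : ℤ) + 1 + i).toNat = m + 2 by omega,
        show ((N : ℤ) + i).toNat = m + 1 by omega,
        show ((N : ℤ) + i - 1).toNat = m by omega,
        show ((N : ℤ) + i + 1).toNat = m + 2 by omega,
        v1nat hQ (2 * N) m]
      have t2 : (q ^ 2) ^ (2 * N - m) * q ^ (i ^ 2) = q ^ ((i - 1) ^ 2) * q ^ (2 * N + 1) := by
        rw [← pow_mul, hzp, mul_comm (q ^ ((i-1)^2)), hzp]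
        congr 1
        have : ((2 * N - m : ℕ) : ℤ) = 2 * (N:ℤ) - m := by omega
        push_cast [this]
        linear_combination (-2 : ℤ) * hm
      have t3 : (q ^ 2) ^ (m + 2) * q ^ (i ^ 2) = q ^ ((i + 1) ^ 2) * q ^ (2 * N + 1) := by
        rw [← pow_mul, hzp, mul_comm (q ^ ((i+1)^2)), hzp]
        congr 1
        push_cast
        linear_combination (2 : ℤ) * hm
      linear_combination gb (q ^ 2) (2 * N) m * t2 + gb (q ^ 2) (2 * N) (m + 2) * t3
    · -- i ≥ N + 2 : everything out of range
      rw [gbz_of_gt (m := (N:ℤ) + 1 + i) (by omega), gbz_of_gt (m := (N:ℤ) + i) (by omega),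
        gbz_of_gt (m := (N:ℤ) + i - 1) (by omega), gbz_of_gt (m := (N:ℤ) + i + 1) (by omega)]
      ring

lemma hQ_of (hq : ‖q‖ < 1) : ‖q ^ 2‖ < 1 := by
  rw [norm_pow]; exact pow_lt_one₀ (norm_nonneg _) hq (by norm_num)

lemma finite_jtp (hq0 : q ≠ 0) (hq : ‖q‖ < 1) (hx : x ≠ 0) (N : ℕ) :
    ∏ k ∈ Finset.range N, ((1 + x * q ^ (2 * k + 1)) * (1 + x⁻¹ * q ^ (2 * k + 1)))
      = ∑ i ∈ Finset.Icc (-(N : ℤ)) (N : ℤ),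
          gbz (q ^ 2) (2 * N) ((N : ℤ) + i) * q ^ (i ^ 2) * x ^ i := by
  have hQ : ‖q ^ 2‖ < 1 := hQ_of hq
  induction N with
  | zero =>
    simp only [Finset.range_zero, Finset.prod_empty, Nat.cast_zero, neg_zero, Finset.Icc_self,
      Finset.sum_singleton, mul_zero, add_zero, zero_add]
    rw [gbz_of_nonneg le_rfl]
    norm_num [gb_zero_right hQ]
  | succ N ih =>
    set f : ℤ → ℂ := fun j => gbz (q ^ 2) (2 * N) ((N : ℤ) + j) * q ^ (j ^ 2) * x ^ j with hf
    have hshrink : ∀ a b : ℤ, a ≤ -(N : ℤ) → (N : ℤ) ≤ b →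
        ∑ i ∈ Finset.Icc a b, f i = ∑ i ∈ Finset.Icc (-(N : ℤ)) (N : ℤ), f i := by
      intro a b ha hb
      refine (Finset.sum_subset (Finset.Icc_subset_Icc ha hb) ?_).symm
      intro i hi hni
      simp only [Finset.mem_Icc, not_and_or, not_le] at hi hni
      rcases hni with h | h
      · simp only [hf, gbz_of_neg (show (N : ℤ) + i < 0 by omega), zero_mul]
      · simp only [hf, gbz_of_gt (show ((2 * N : ℕ) : ℤ) < (N : ℤ) + i by push_cast; omega),
          zero_mul]
    rw [Finset.prod_range_succ, ih]
    have hcast1 : ((N + 1 : ℕ) : ℤ) = (N : ℤ) + 1 := by push_cast; ring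
    have hIcc : Finset.Icc (-((N + 1 : ℕ) : ℤ)) ((N + 1 : ℕ) : ℤ)
        = Finset.Icc (-(N : ℤ) - 1) ((N : ℤ) + 1) := by rw [hcast1]; congr 1; ring
    have h2N : 2 * (N + 1) = 2 * N + 2 := by ring
    rw [hIcc, h2N]
    have keyx : ∀ i ∈ Finset.Icc (-(N : ℤ) - 1) ((N : ℤ) + 1),
        gbz (q ^ 2) (2 * N + 2) (((N + 1 : ℕ) : ℤ) + i) * q ^ (i ^ 2) * x ^ i
          = f i * (1 + q ^ (4 * N + 2)) + f (i - 1) * (q ^ (2 * N + 1) * x)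
            + f (i + 1) * (q ^ (2 * N + 1) * x⁻¹) := by
      intro i _
      have hk := key hq0 hq N i
      have xe1 : x ^ (i - 1) * x = x ^ i := by
        rw [← zpow_add_one₀ hx]; congr 1; ring
      have xe2 : x ^ (i + 1) * x⁻¹ = x ^ i := by
        rw [← zpow_sub_one₀ hx]; congr 1; ring
      have hfm : f (i - 1) = gbz (q ^ 2) (2 * N) ((N:ℤ) + i - 1) * q ^ ((i - 1) ^ 2) * x ^ (i - 1) := by
        simp only [hf]; rw [show (N:ℤ) + (i - 1) = (N:ℤ) + i - 1 by ring]
      have hfp : f (i + 1) = gbz (q ^ 2) (2 * N) ((N:ℤ) + i + 1) * q ^ ((i + 1) ^ 2) * x ^ (i + 1) := by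
        simp only [hf]; rw [show (N:ℤ) + (i + 1) = (N:ℤ) + i + 1 by ring]
      rw [hcast1, hfm, hfp, hf]
      simp only
      linear_combination x ^ i * hk
        - gbz (q ^ 2) (2 * N) ((N:ℤ) + i - 1) * q ^ ((i - 1) ^ 2) * q ^ (2 * N + 1) * xe1
        - gbz (q ^ 2) (2 * N) ((N:ℤ) + i + 1) * q ^ ((i + 1) ^ 2) * q ^ (2 * N + 1) * xe2
    symm
    calc ∑ i ∈ Finset.Icc (-(N : ℤ) - 1) ((N : ℤ) + 1),
            gbz (q ^ 2) (2 * N + 2) (((N + 1 : ℕ) : ℤ) + i) * q ^ (i ^ 2) * x ^ i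
        = ∑ i ∈ Finset.Icc (-(N : ℤ) - 1) ((N : ℤ) + 1),
            (f i * (1 + q ^ (4 * N + 2)) + f (i - 1) * (q ^ (2 * N + 1) * x)
              + f (i + 1) * (q ^ (2 * N + 1) * x⁻¹)) := Finset.sum_congr rfl keyx
      _ = (∑ i ∈ Finset.Icc (-(N : ℤ) - 1) ((N : ℤ) + 1), f i) * (1 + q ^ (4 * N + 2))
          + (∑ i ∈ Finset.Icc (-(N : ℤ) - 1) ((N : ℤ) + 1), f (i - 1)) * (q ^ (2 * N + 1) * x)
          + (∑ i ∈ Finset.Icc (-(N : ℤ) - 1) ((N : ℤ) + 1), f (i + 1)) * (q ^ (2 * N + 1) * x⁻¹) := by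
          rw [Finset.sum_add_distrib, Finset.sum_add_distrib, Finset.sum_mul, Finset.sum_mul,
            Finset.sum_mul]
      _ = (∑ i ∈ Finset.Icc (-(N : ℤ)) (N : ℤ), f i) * (1 + q ^ (4 * N + 2))
          + (∑ i ∈ Finset.Icc (-(N : ℤ)) (N : ℤ), f i) * (q ^ (2 * N + 1) * x)
          + (∑ i ∈ Finset.Icc (-(N : ℤ)) (N : ℤ), f i) * (q ^ (2 * N + 1) * x⁻¹) := by
          congr 1
          · congr 1
            · congr 1; exact hshrink _ _ (by omega) (by omega)
            · congr 1
              rw [show Finset.Icc (-(N:ℤ) - 1) ((N:ℤ) + 1)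
                  = (Finset.Icc (-(N:ℤ) - 2) ((N:ℤ))).map (addRightEmbedding 1) by
                    rw [Finset.map_add_right_Icc]; congr 1 <;> ring,
                Finset.sum_map]
              simp only [addRightEmbedding_apply, add_sub_cancel_right]
              exact hshrink _ _ (by omega) (by omega)
          · congr 1
            rw [show Finset.Icc (-(N:ℤ) - 1) ((N:ℤ) + 1)
                = (Finset.Icc (-(N:ℤ)) ((N:ℤ) + 2)).map (addRightEmbedding (-1)) by
                  rw [Finset.map_add_right_Icc]; congr 1 <;> ring,
              Finset.sum_map]
            simp only [addRightEmbedding_apply]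
            have : ∀ i : ℤ, f (i + -1 + 1) = f i := by intro i; congr 1; ring
            rw [Finset.sum_congr rfl fun i _ => this i]
            exact hshrink _ _ (by omega) (by omega)
      _ = (∑ i ∈ Finset.Icc (-(N : ℤ)) (N : ℤ), f i)
            * ((1 + x * q ^ (2 * N + 1)) * (1 + x⁻¹ * q ^ (2 * N + 1))) := by
          have hxi : x * x⁻¹ = 1 := mul_inv_cancel₀ hx
          have hpow : q ^ (4 * N + 2) = q ^ (2 * N + 1) * q ^ (2 * N + 1) := by
            rw [← pow_add]; congr 1; ring
          linear_combination -(∑ i ∈ Finset.Icc (-(N : ℤ)) (N : ℤ), f i)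
            * (q ^ (2 * N + 1) * q ^ (2 * N + 1)) * hxi
            + (∑ i ∈ Finset.Icc (-(N : ℤ)) (N : ℤ), f i) * hpow

lemma summable_pow_succ (hQ : ‖Q‖ < 1) : Summable fun k : ℕ => Q ^ (k + 1) := by
  have := (summable_geometric_of_norm_lt_one hQ).mul_left Q
  refine this.congr fun k => ?_
  rw [pow_succ]; ring

lemma summable_log_one_add {f : ℕ → ℂ} (hf : Summable f) :
    Summable fun k => Complex.log (1 + f k) := by
  have h0 : Tendsto (fun k => ‖f k‖) atTop (𝓝 0) := by
    simpa using hf.tendsto_atTop_zero.norm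
  refine Summable.of_norm_bounded_eventually_nat (g := fun k => 3 / 2 * ‖f k‖)
    (hf.norm.mul_left _) ?_
  filter_upwards [h0.eventually_lt_const (by norm_num : (0:ℝ) < 1/2)] with k hk
  exact Complex.norm_log_one_add_half_le_self hk.le

lemma multipliable_one_add {f : ℕ → ℂ} (hf : Summable f) (hne : ∀ k, 1 + f k ≠ 0) :
    Multipliable fun k => 1 + f k :=
  Complex.multipliable_of_summable_log (summable_log_one_add hf)

lemma tprod_one_add_ne_zero {f : ℕ → ℂ} (hf : Summable f) (hne : ∀ k, 1 + f k ≠ 0) :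
    (∏' k, (1 + f k)) ≠ 0 := by
  have : Complex.exp (∑' k, Complex.log (1 + f k)) = ∏' k, (1 + f k) :=
    Complex.cexp_tsum_eq_tprod hne (summable_log_one_add hf)
  rw [← this]
  exact Complex.exp_ne_zero _

lemma multipliable_u (hQ : ‖Q‖ < 1) : Multipliable fun k : ℕ => 1 - Q ^ (k + 1) := by
  refine (multipliable_one_add (summable_pow_succ hQ).neg fun k => ?_).congr fun k => ?_
  · rw [← sub_eq_add_neg]; exact one_sub_pow_ne hQ k
  · rw [← sub_eq_add_neg]

lemma tendsto_u (hQ : ‖Q‖ < 1) :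
    Tendsto (u Q) atTop (𝓝 (∏' k : ℕ, (1 - Q ^ (k + 1)))) := by
  exact (multipliable_u hQ).hasProd.tendsto_prod_nat

lemma tprod_u_ne (hQ : ‖Q‖ < 1) : (∏' k : ℕ, (1 - Q ^ (k + 1))) ≠ 0 := by
  have h := tprod_one_add_ne_zero (f := fun k => -(Q ^ (k + 1))) (summable_pow_succ hQ).neg
    (fun k => by rw [← sub_eq_add_neg]; exact one_sub_pow_ne hQ k)
  rwa [tprod_congr (fun k => by rw [← sub_eq_add_neg] : ∀ k : ℕ, 1 + -(Q ^ (k+1)) = 1 - Q ^ (k+1))] at h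

lemma summable_norm_pow_succ (hQ : ‖Q‖ < 1) : Summable fun k : ℕ => ‖Q‖ ^ (k + 1) := by
  have := (summable_geometric_of_lt_one (norm_nonneg Q) hQ).mul_left ‖Q‖
  refine this.congr fun k => ?_
  rw [pow_succ]; ring

lemma u_norm_le (hQ : ‖Q‖ < 1) (n : ℕ) :
    ‖u Q n‖ ≤ Real.exp (∑' k : ℕ, ‖Q‖ ^ (k + 1)) := by
  calc ‖u Q n‖ = ∏ k ∈ Finset.range n, ‖1 - Q ^ (k + 1)‖ := norm_prod _ _
    _ ≤ ∏ k ∈ Finset.range n, Real.exp (‖Q‖ ^ (k + 1)) := by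
        refine Finset.prod_le_prod (fun k _ => norm_nonneg _) fun k _ => ?_
        calc ‖1 - Q ^ (k + 1)‖ ≤ ‖(1:ℂ)‖ + ‖Q ^ (k + 1)‖ := norm_sub_le _ _
          _ = ‖Q‖ ^ (k + 1) + 1 := by rw [norm_one, norm_pow]; ring
          _ ≤ Real.exp (‖Q‖ ^ (k + 1)) := Real.add_one_le_exp _
    _ = Real.exp (∑ k ∈ Finset.range n, ‖Q‖ ^ (k + 1)) := (Real.exp_sum _ _).symm
    _ ≤ _ := by
        rw [Real.exp_le_exp]
        exact Summable.sum_le_tsum _ (fun k _ => pow_nonneg (norm_nonneg _) _) (summable_norm_pow_succ hQ)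

lemma weier (a : ℕ → ℝ) (h0 : ∀ k, 0 ≤ a k) (h1 : ∀ k, a k ≤ 1) (m : ℕ) :
    ∀ n, 1 - ∑ k ∈ Finset.Ico m n, a k ≤ ∏ k ∈ Finset.Ico m n, (1 - a k) := by
  intro n
  induction n with
  | zero => simp
  | succ n ih =>
    rcases le_or_gt m (n + 1) with h | h
    · rcases le_or_gt m n with h' | h'
      · rw [Finset.sum_Ico_succ_top h', Finset.prod_Ico_succ_top h']
        have hs : 0 ≤ ∑ k ∈ Finset.Ico m n, a k := Finset.sum_nonneg fun k _ => h0 k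
        nlinarith [h0 n, h1 n, ih]
      · have : m = n + 1 := by omega
        subst this; simp
    · rw [Finset.Ico_eq_empty (by omega)]; simp
  
lemma u_norm_lower (hQ : ‖Q‖ < 1) : ∃ L : ℝ, 0 < L ∧ ∀ n, L ≤ ‖u Q n‖ := by
  -- tail bound
  obtain ⟨K, hK⟩ : ∃ K : ℕ, ∀ n, ∑ k ∈ Finset.Ico K n, ‖Q‖ ^ (k + 1) ≤ 1 / 2 := by
    have htt : Tendsto (fun K : ℕ => ‖Q‖ ^ (K + 1) * (1 - ‖Q‖)⁻¹) atTop (𝓝 0) := by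
      have h1 : Tendsto (fun K : ℕ => ‖Q‖ ^ (K + 1)) atTop (𝓝 0) :=
        (tendsto_pow_atTop_nhds_zero_of_lt_one (norm_nonneg Q) hQ).comp
          (tendsto_add_atTop_nat 1)
      simpa using h1.mul_const (1 - ‖Q‖)⁻¹
    obtain ⟨K, hK⟩ := (htt.eventually_le_const (by norm_num : (0:ℝ) < 1/2)).exists
    refine ⟨K, fun n => le_trans ?_ hK⟩
    rw [Finset.sum_Ico_eq_sum_range]
    calc ∑ k ∈ Finset.range (n - K), ‖Q‖ ^ (K + k + 1)
        = ∑ k ∈ Finset.range (n - K), ‖Q‖ ^ (K + 1) * ‖Q‖ ^ k := by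
          refine Finset.sum_congr rfl fun k _ => ?_
          rw [← pow_add]; congr 1; omega
      _ ≤ ∑' k : ℕ, ‖Q‖ ^ (K + 1) * ‖Q‖ ^ k := by
          refine Summable.sum_le_tsum _ (fun k _ => by positivity) ?_
          exact (summable_geometric_of_lt_one (norm_nonneg Q) hQ).mul_left _
      _ = ‖Q‖ ^ (K + 1) * (1 - ‖Q‖)⁻¹ := by
          rw [tsum_mul_left, tsum_geometric_of_lt_one (norm_nonneg Q) hQ]
  have hfac_pos : ∀ k : ℕ, (0:ℝ) < 1 - ‖Q‖ ^ (k + 1) := fun k => by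
    have : ‖Q‖ ^ (k + 1) < 1 := pow_lt_one₀ (norm_nonneg Q) hQ (Nat.succ_ne_zero k)
    linarith
  have hfac_le : ∀ k : ℕ, 1 - ‖Q‖ ^ (k + 1) ≤ 1 := fun k => by
    have : (0:ℝ) ≤ ‖Q‖ ^ (k + 1) := by positivity
    linarith
  set P : ℕ → ℝ := fun n => ∏ k ∈ Finset.range n, (1 - ‖Q‖ ^ (k + 1)) with hP
  have hPpos : ∀ n, 0 < P n := fun n => Finset.prod_pos fun k _ => hfac_pos k
  refine ⟨P K * (1/2), mul_pos (hPpos K) (by norm_num), fun n => ?_⟩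
  have step1 : P n ≤ ‖u Q n‖ := by
    rw [hP, u]
    rw [norm_prod]
    refine Finset.prod_le_prod (fun k _ => (hfac_pos k).le) fun k _ => ?_
    calc 1 - ‖Q‖ ^ (k + 1) = ‖(1:ℂ)‖ - ‖Q ^ (k + 1)‖ := by rw [norm_one, norm_pow]
      _ ≤ ‖1 - Q ^ (k + 1)‖ := norm_sub_norm_le _ _
  refine le_trans ?_ step1
  rcases le_or_gt n K with h | h
  · -- P K ≤ P n since extra factors ≤ 1
    have hsplit : P n * ∏ k ∈ Finset.Ico n K, (1 - ‖Q‖ ^ (k + 1)) = P K :=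
      Finset.prod_range_mul_prod_Ico _ h
    have hIle : ∏ k ∈ Finset.Ico n K, (1 - ‖Q‖ ^ (k + 1)) ≤ 1 :=
      Finset.prod_le_one (fun k _ => (hfac_pos k).le) (fun k _ => hfac_le k)
    nlinarith [hPpos n, hPpos K]
  · have hsplit : P K * ∏ k ∈ Finset.Ico K n, (1 - ‖Q‖ ^ (k + 1)) = P n :=
      Finset.prod_range_mul_prod_Ico _ h.le
    have hw := weier (fun k => ‖Q‖ ^ (k + 1)) (fun k => by positivity) (fun k => by
      have := hfac_pos k; linarith) K n
    have := hK n
    nlinarith [hPpos K, hPpos n]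

lemma tendsto_partial_products (hq0 : q ≠ 0) (hq : ‖q‖ < 1) (hx : x ≠ 0) :
    Tendsto (fun N => ∏ k ∈ Finset.range N,
        ((1 - (q ^ 2) ^ (k + 1)) * ((1 + x * q ^ (2 * k + 1)) * (1 + x⁻¹ * q ^ (2 * k + 1)))))
      atTop (𝓝 (∑' j : ℤ, q ^ (j ^ 2) * x ^ j)) := by
  have hQ : ‖q ^ 2‖ < 1 := hQ_of hq
  set Q := q ^ 2 with hQdef
  obtain ⟨L, hL, hLle⟩ := u_norm_lower hQ
  set U := Real.exp (∑' k : ℕ, ‖Q‖ ^ (k + 1)) with hU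
  have hU0 : 0 < U := Real.exp_pos _
  set R := max ‖x‖ ‖x⁻¹‖ with hR
  have hR0 : 0 < R := lt_max_of_lt_left (norm_pos_iff.2 hx)
  set C := U * U / (L * L) with hC
  have hC0 : 0 < C := by positivity
  set g : ℕ → ℤ → ℂ := fun N j => u Q N * (gbz Q (2 * N) ((N : ℤ) + j) * q ^ (j ^ 2) * x ^ j)
    with hg
  set bound : ℤ → ℝ := fun j => C * (‖q‖ ^ (j.natAbs ^ 2) * R ^ j.natAbs) with hbound
  -- norm computations
  have hqz : ∀ j : ℤ, ‖q ^ (j ^ 2)‖ = ‖q‖ ^ (j.natAbs ^ 2) := by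
    intro j
    have : q ^ (j ^ 2) = q ^ ((j.natAbs ^ 2 : ℕ) : ℤ) := by
      congr 1; push_cast [Int.natAbs_sq]; rw [sq_abs]
    rw [this, zpow_natCast, norm_pow]
  have hxz : ∀ j : ℤ, ‖x ^ j‖ ≤ R ^ j.natAbs := by
    intro j
    rcases le_or_gt 0 j with h | h
    · have : x ^ j = x ^ (j.natAbs) := by
        rw [← zpow_natCast]; congr 1; omega
      rw [this, norm_pow]
      exact pow_le_pow_left₀ (norm_nonneg _) (le_max_left _ _) _
    · have : x ^ j = (x⁻¹) ^ (j.natAbs) := by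
        conv_lhs => rw [show j = -((j.natAbs : ℕ) : ℤ) by omega]
        rw [zpow_neg, ← inv_zpow, zpow_natCast]
      rw [this, norm_pow]
      exact pow_le_pow_left₀ (norm_nonneg _) (le_max_right _ _) _
  -- domination
  have h_bound : ∀ N : ℕ, ∀ j : ℤ, ‖g N j‖ ≤ bound j := by
    intro N j
    rcases le_or_gt (j.natAbs) N with hjN | hjN
    · have h0 : (0:ℤ) ≤ (N : ℤ) + j := by omega
      have h1 : ((N : ℤ) + j).toNat ≤ 2 * N := by omega
      rw [hg]
      simp only
      rw [gbz_of_nonneg h0, gb_eq h1]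
      rw [norm_mul, norm_mul, norm_mul, norm_div, norm_mul, hqz]
      calc ‖u Q N‖ * (‖u Q (2 * N)‖ / (‖u Q ((N:ℤ)+j).toNat‖ * ‖u Q (2*N - ((N:ℤ)+j).toNat)‖)
            * ‖q‖ ^ (j.natAbs ^ 2) * ‖x ^ j‖)
          ≤ U * (U / (L * L) * ‖q‖ ^ (j.natAbs ^ 2) * R ^ j.natAbs) := by
            gcongr
            · exact u_norm_le hQ _
            · exact u_norm_le hQ _
            · exact hLle _
            · exact hLle _
            · exact hxz j
        _ = bound j := by rw [hbound]; simp only; rw [hC]; ring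
    · have : g N j = 0 := by
        rw [hg]; simp only
        rcases le_or_gt 0 ((N:ℤ) + j) with h | h
        · rw [gbz_of_gt (by push_cast; omega)]; ring
        · rw [gbz_of_neg h]; ring
      rw [this, norm_zero, hbound]
      have : (0:ℝ) ≤ ‖q‖ ^ (j.natAbs ^ 2) * R ^ j.natAbs := by positivity
      positivity
  -- summability of the bound
  have hb_nat : Summable fun n : ℕ => C * (‖q‖ ^ (n ^ 2) * R ^ n) := by
    apply Summable.mul_left
    have hq1 : ‖q‖ < 1 := hq
    have hq0' : 0 ≤ ‖q‖ := norm_nonneg q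
    obtain ⟨M, hM⟩ : ∃ M : ℕ, ‖q‖ ^ M * R ≤ 1 / 2 := by
      have : Tendsto (fun M : ℕ => ‖q‖ ^ M * R) atTop (𝓝 0) := by
        simpa using (tendsto_pow_atTop_nhds_zero_of_lt_one hq0' hq1).mul_const R
      exact (this.eventually_le_const (by norm_num : (0:ℝ) < 1/2)).exists
    refine Summable.of_norm_bounded_eventually_nat (g := fun n => (1/2 : ℝ) ^ n)
      (summable_geometric_of_lt_one (by norm_num) (by norm_num)) ?_
    filter_upwards [eventually_ge_atTop M] with n hn
    have e1 : ‖q‖ ^ (n ^ 2) * R ^ n = (‖q‖ ^ n * R) ^ n := by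
      rw [mul_pow, ← pow_mul]; ring_nf
    rw [Real.norm_of_nonneg (by positivity), e1]
    refine pow_le_pow_left₀ (by positivity) ?_ n
    calc ‖q‖ ^ n * R ≤ ‖q‖ ^ M * R :=
          mul_le_mul_of_nonneg_right (pow_le_pow_of_le_one hq0' hq1.le hn) hR0.le
      _ ≤ 1 / 2 := hM
  have hb_sum : Summable bound := by
    apply Summable.of_nat_of_neg
    · refine hb_nat.congr fun n => ?_
      rw [hbound]; simp
    · refine hb_nat.congr fun n => ?_
      rw [hbound]; simp
  -- pointwise limits
  have hab : ∀ j : ℤ, Tendsto (fun N => g N j) atTop (𝓝 (q ^ (j ^ 2) * x ^ j)) := by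
    intro j
    set h := ∏' k : ℕ, (1 - Q ^ (k + 1)) with hh
    have hne := tprod_u_ne hQ
    have t1 : Tendsto (fun N : ℕ => u Q N) atTop (𝓝 h) := tendsto_u hQ
    have hmono2 : Tendsto (fun N : ℕ => 2 * N) atTop atTop :=
      tendsto_atTop_atTop_of_monotone (fun a b hab => by omega) (fun b => ⟨b, by omega⟩)
    have t2 : Tendsto (fun N : ℕ => u Q (2 * N)) atTop (𝓝 h) := t1.comp hmono2
    have hmono3 : ∀ n : ℕ, n - j.natAbs ≤ ((n:ℤ) + j).toNat := fun n => by omega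
    have hmono4 : ∀ n : ℕ, n - j.natAbs ≤ 2 * n - ((n:ℤ) + j).toNat := fun n => by omega
    have t3 : Tendsto (fun N : ℕ => u Q (((N:ℤ) + j).toNat)) atTop (𝓝 h) :=
      t1.comp (tendsto_atTop_mono hmono3 (tendsto_sub_atTop_nat _))
    have t4 : Tendsto (fun N : ℕ => u Q (2 * N - ((N:ℤ) + j).toNat)) atTop (𝓝 h) :=
      t1.comp (tendsto_atTop_mono hmono4 (tendsto_sub_atTop_nat _))
    have tall : Tendsto (fun N : ℕ =>
        u Q N * u Q (2 * N) / (u Q (((N:ℤ) + j).toNat) * u Q (2 * N - ((N:ℤ) + j).toNat))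
          * (q ^ (j ^ 2) * x ^ j)) atTop (𝓝 (h * h / (h * h) * (q ^ (j ^ 2) * x ^ j))) :=
      (((t1.mul t2).div (t3.mul t4) (mul_ne_zero hne hne)).mul_const _)
    rw [div_self (mul_ne_zero hne hne), one_mul] at tall
    refine tall.congr' ?_
    filter_upwards [eventually_ge_atTop j.natAbs] with N hN
    have h0 : (0:ℤ) ≤ (N : ℤ) + j := by omega
    have h1 : ((N : ℤ) + j).toNat ≤ 2 * N := by omega
    rw [hg]
    simp only
    rw [gbz_of_nonneg h0, gb_eq h1]
    ring
  -- Tannery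
  have tann := tendsto_tsum_of_dominated_convergence (f := g)
    (g := fun j : ℤ => q ^ (j ^ 2) * x ^ j) hb_sum hab (Eventually.of_forall h_bound)
  -- identify the partial tsums with partial products
  refine tann.congr fun N => ?_
  have hsupp : ∀ j ∉ Finset.Icc (-(N:ℤ)) (N:ℤ), g N j = 0 := by
    intro j hj
    simp only [Finset.mem_Icc, not_and_or, not_le] at hj
    rw [hg]; simp only
    rcases hj with h | h
    · rw [gbz_of_neg (by omega)]; ring
    · rw [gbz_of_gt (by push_cast; omega)]; ring
  rw [tsum_eq_sum hsupp, ← Finset.mul_sum, ← finite_jtp hq0 hq hx N]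
  simp only [u]
  rw [← Finset.prod_mul_distrib]

theorem jtp_qx (hq0 : q ≠ 0) (hq : ‖q‖ < 1) (hx : x ≠ 0) :
    (∏' k : ℕ, ((1 - (q ^ 2) ^ (k + 1))
        * ((1 + x * q ^ (2 * k + 1)) * (1 + x⁻¹ * q ^ (2 * k + 1)))))
      = ∑' j : ℤ, q ^ (j ^ 2) * x ^ j := by
  set F : ℕ → ℂ := fun k => (1 - (q ^ 2) ^ (k + 1))
    * ((1 + x * q ^ (2 * k + 1)) * (1 + x⁻¹ * q ^ (2 * k + 1))) with hF
  have htend := tendsto_partial_products hq0 hq hx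
  have hsumgeo : Summable fun k : ℕ => (q ^ 2) ^ k :=
    summable_geometric_of_norm_lt_one (hQ_of hq)
  by_cases hz : ∀ k, F k ≠ 0
  · have m1 : Multipliable fun k : ℕ => 1 - (q ^ 2) ^ (k + 1) := multipliable_u (hQ_of hq)
    have m2 : Multipliable fun k : ℕ => 1 + x * q ^ (2 * k + 1) := by
      refine multipliable_one_add ((hsumgeo.mul_left (x * q)).congr fun k => by ring) fun k => ?_
      have := hz k
      rw [hF] at this
      simp only [mul_ne_zero_iff] at this
      exact this.2.1
    have m3 : Multipliable fun k : ℕ => 1 + x⁻¹ * q ^ (2 * k + 1) := by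
      refine multipliable_one_add ((hsumgeo.mul_left (x⁻¹ * q)).congr fun k => by ring)
        fun k => ?_
      have := hz k
      rw [hF] at this
      simp only [mul_ne_zero_iff] at this
      exact this.2.2
    have hm : Multipliable F := m1.mul (m2.mul m3)
    exact tendsto_nhds_unique (hm.hasProd.tendsto_prod_nat) htend
  · push_neg at hz
    obtain ⟨k0, hk0⟩ := hz
    have h1 : Tendsto (fun N => ∏ k ∈ Finset.range N, F k) atTop (𝓝 0) := by
      refine tendsto_const_nhds.congr' ?_
      filter_upwards [eventually_ge_atTop (k0 + 1)] with N hN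
      exact (Finset.prod_eq_zero (Finset.mem_range.2 (by omega)) hk0).symm
    have hsum0 : (∑' j : ℤ, q ^ (j ^ 2) * x ^ j) = 0 := tendsto_nhds_unique htend h1
    have hprod0 : HasProd F 0 := by
      refine tendsto_const_nhds.congr' ?_
      filter_upwards [eventually_ge_atTop ({k0} : Finset ℕ)] with s hs
      exact (Finset.prod_eq_zero (hs (Finset.mem_singleton_self k0)) hk0).symm
    rw [hsum0, hprod0.tprod_eq]

end JTP

open JTP Complex Real

theorem jacobi_triple_product_exp (τ z : ℂ) (hτ : 0 < τ.im) :
    ∏' n : ℕ, ((1 - Complex.exp (2 * π * I * (n + 1) * τ)) *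
      (1 + Complex.exp (π * I * (2 * (n + 1) - 1) * τ) * Complex.exp (2 * π * I * z)) *
      (1 + Complex.exp (π * I * (2 * (n + 1) - 1) * τ) * Complex.exp (-(2 * π * I * z)))) =
    ∑' n : ℤ, Complex.exp (π * I * (n : ℂ) ^ 2 * τ) * Complex.exp (2 * π * I * n * z) := by
  set q : ℂ := Complex.exp (π * I * τ) with hqdef
  set x : ℂ := Complex.exp (2 * π * I * z) with hxdef
  have hq0 : q ≠ 0 := Complex.exp_ne_zero _
  have hx : x ≠ 0 := Complex.exp_ne_zero _
  have hre : (π * I * τ).re = -(π * τ.im) := by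
    rw [show (π : ℂ) * I * τ = (π : ℝ) * (I * τ) by push_cast; ring]
    simp [Complex.mul_re]
  have hq : ‖q‖ < 1 := by
    rw [hqdef, Complex.norm_exp, hre]
    rw [Real.exp_lt_one_iff]
    have := Real.pi_pos
    nlinarith
  have hL : ∀ n : ℕ,
      (1 - Complex.exp (2 * π * I * (n + 1) * τ)) *
        (1 + Complex.exp (π * I * (2 * (n + 1) - 1) * τ) * Complex.exp (2 * π * I * z)) *
        (1 + Complex.exp (π * I * (2 * (n + 1) - 1) * τ) * Complex.exp (-(2 * π * I * z)))
      = (1 - (q ^ 2) ^ (n + 1)) * ((1 + x * q ^ (2 * n + 1)) * (1 + x⁻¹ * q ^ (2 * n + 1))) := by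
    intro n
    have e1 : Complex.exp (2 * π * I * (n + 1) * τ) = (q ^ 2) ^ (n + 1) := by
      rw [show 2 * π * I * (n + 1) * τ = ((2 * (n + 1) : ℕ) : ℂ) * (π * I * τ) by
        push_cast; ring]
      rw [Complex.exp_nat_mul, pow_mul]
    have e2 : Complex.exp (π * I * (2 * (n + 1) - 1) * τ) = q ^ (2 * n + 1) := by
      rw [show π * I * (2 * (n + 1) - 1) * τ = ((2 * n + 1 : ℕ) : ℂ) * (π * I * τ) by
        push_cast; ring]
      rw [Complex.exp_nat_mul]
    have e3 : Complex.exp (-(2 * π * I * z)) = x⁻¹ := by rw [Complex.exp_neg]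
    rw [e1, e2, e3]
    ring
  have hR : ∀ n : ℤ,
      Complex.exp (π * I * (n : ℂ) ^ 2 * τ) * Complex.exp (2 * π * I * n * z)
        = q ^ (n ^ 2) * x ^ n := by
    intro n
    have e4 : Complex.exp (π * I * (n : ℂ) ^ 2 * τ) = q ^ (n ^ 2) := by
      rw [show π * I * (n : ℂ) ^ 2 * τ = ((n ^ 2 : ℤ) : ℂ) * (π * I * τ) by push_cast; ring]
      rw [Complex.exp_int_mul]
    have e5 : Complex.exp (2 * π * I * n * z) = x ^ n := by
      rw [show 2 * π * I * (n : ℂ) * z = ((n : ℤ) : ℂ) * (2 * π * I * z) by push_cast; ring]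
      rw [Complex.exp_int_mul]
    rw [e4, e5]
  rw [tprod_congr hL, tsum_congr hR]
  exact jtp_qx hq0 hq hx
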